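/- Let D be a digraph and m ≤ |A(D)| an integer. Define a BNSL instance over vertex set V(D) with additive local score functions given by f_y(x) = 1 if xy ∈ A(D) and f_y(x) = 0 otherwise, where the score of a DAG D' on V(D) is the sum over arcs ab of D' of f_b(a). Then there exists a feedback arc set of D of size at most m if and only if there exists a DAG D' on V(D) achieving score at least |A(D)| − m. -/

import Mathlib

/-- reduction from Minimum Feedback Arc Set to additive BNSL.
`A` is the arc relation of the digraph `D`; the additive scores are
`f_y(x) = 1` iff `xy` is an arc of `D`, so the score of a DAG `B` is the
number of arcs of `B` that are also arcs of `D`. -/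
theorem stmt7 {V : Type*} [Fintype V] (A : V → V → Prop) (m : ℕ)
    (hm : m ≤ {p : V × V | A p.1 p.2}.ncard) :
    (∃ A' : Set (V × V), A' ⊆ {p : V × V | A p.1 p.2} ∧ A'.ncard ≤ m ∧
        Irreflexive (Relation.TransGen fun x y => A x y ∧ (x, y) ∉ A')) ↔
      (∃ B : V → V → Prop, Irreflexive (Relation.TransGen B) ∧
        {p : V × V | A p.1 p.2}.ncard - m ≤
          {p : V × V | B p.1 p.2 ∧ A p.1 p.2}.ncard) := by
  classical
  set S : Set (V × V) := {p : V × V | A p.1 p.2} with hS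
  constructor
  · rintro ⟨A', hsub, hcard, hirr⟩
    refine ⟨fun x y => A x y ∧ (x, y) ∉ A', hirr, ?_⟩
    have heq : {p : V × V | (A p.1 p.2 ∧ (p.1, p.2) ∉ A') ∧ A p.1 p.2} = S \ A' := by
      ext ⟨x, y⟩; simp only [hS, Set.mem_setOf_eq, Set.mem_diff]; tauto
    rw [heq, Set.ncard_diff hsub]
    exact Nat.sub_le_sub_left hcard _
  · rintro ⟨B, hirr, hcard⟩
    refine ⟨S \ {p : V × V | B p.1 p.2}, Set.diff_subset, ?_, ?_⟩
    · have hss : S \ {p : V × V | B p.1 p.2} = S \ {p : V × V | B p.1 p.2 ∧ A p.1 p.2} := by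
        ext ⟨x, y⟩; simp only [hS, Set.mem_setOf_eq, Set.mem_diff]; tauto
      rw [hss, Set.ncard_diff (by intro p hp; exact hp.2)]
      omega
    · refine fun x hx => hirr x ?_
      refine Relation.TransGen.mono (fun a b hab => ?_) x x hx
      obtain ⟨ha, hb⟩ := hab
      by_contra h
      exact hb ⟨ha, fun hB => h hB⟩
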